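/- Let J be a nonempty poset ideal in Hom(P,[n]) and let A ⊆ P×[n] be a subset whose projection onto P is surjective. Then the monomial m_A does not lie in the ideal B(J) if and only if: (i) A is a staircase face (A contains no pair (p,i),(q,j) with p < q and i > j), and (ii) the map φ_A defined by φ_A(p) = max{ j : (p,j) ∈ A } is isotone and belongs to J. -/
import Mathlib


open MvPolynomial

variable {P : Type*} [PartialOrder P] [Fintype P] [DecidableEq P]

/-- The squarefree monomial `m_A = ∏_{(p,i) ∈ A} x_{p,i}`. -/
noncomputable def mA (k : Type*) [CommRing k] {n : ℕ} (A : Finset (P × Fin n)) :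
    MvPolynomial (P × Fin n) k :=
  ∏ a ∈ A, X a

/-- The graph `Γφ = {(p, φ p) | p ∈ P}` of a map φ : P → [n], as a finite set. -/
def GammaF {n : ℕ} (φ : P → Fin n) : Finset (P × Fin n) :=
  Finset.univ.image fun p => (p, φ p)

/-- The ideal B(J), generated by the monomials m_{Γψ} for isotone ψ ∉ J together with all
quadratic monomials x_{p,i} x_{q,j} with p < q in P and i > j in [n]. -/
noncomputable def BJ (k : Type*) [CommRing k] {n : ℕ} (J : Set (P → Fin n)) :
    Ideal (MvPolynomial (P × Fin n) k) :=
  Ideal.span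
    ({m | ∃ ψ : P → Fin n, Monotone ψ ∧ ψ ∉ J ∧ m = mA k (GammaF ψ)} ∪
      {m | ∃ (p q : P) (i j : Fin n), p < q ∧ j < i ∧ m = X (p, i) * X (q, j)})

/-- The indicator finsupp of a finset. -/
private noncomputable def eF {α : Type*} [DecidableEq α] (A : Finset α) : α →₀ ℕ :=
  ∑ a ∈ A, Finsupp.single a 1

private lemma eF_apply {α : Type*} [DecidableEq α] (A : Finset α) (b : α) :
    eF A b = if b ∈ A then 1 else 0 := by
  classical
  rw [eF, Finset.sum_apply']
  simp [Finsupp.single_apply]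

private lemma eF_le_eF {α : Type*} [DecidableEq α] {B A : Finset α} :
    eF B ≤ eF A ↔ B ⊆ A := by
  constructor
  · intro h b hb
    have := h b
    rw [eF_apply, eF_apply, if_pos hb] at this
    by_contra hbA
    rw [if_neg hbA] at this
    omega
  · intro h b
    rw [eF_apply, eF_apply]
    split_ifs with h1 h2
    · omega
    · exact absurd (h h1) h2
    · omega
    · omega

private lemma pair_le_eF {α : Type*} [DecidableEq α] {A : Finset α} {x y : α} (hxy : x ≠ y) :
    Finsupp.single x 1 + Finsupp.single y 1 ≤ eF A ↔ x ∈ A ∧ y ∈ A := by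
  have : Finsupp.single x 1 + Finsupp.single y 1 = eF ({x, y} : Finset α) := by
    rw [eF, Finset.sum_pair hxy]
  rw [this, eF_le_eF, Finset.insert_subset_iff, Finset.singleton_subset_iff]

private lemma mA_eq_monomial (k : Type*) [CommRing k] {n : ℕ} (A : Finset (P × Fin n)) :
    mA k A = monomial (eF A) (1 : k) := by
  rw [mA, eF, monomial_sum_one]
  rfl

/-- Let J be a nonempty poset ideal in Hom(P,[n]) and A ⊆ P × [n] a subset whose projection
onto P is surjective.  Then m_A ∉ B(J) iff (i) A is a staircase face and (ii) the map
φ_A, φ_A(p) = max{j : (p,j) ∈ A}, is isotone and belongs to J. -/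
theorem stmt10 (k : Type*) [Field k] {n : ℕ} (J : Set (P → Fin n))
    (hJ1 : ∀ φ ∈ J, Monotone φ)
    (hJ2 : ∀ φ ∈ J, ∀ ψ : P → Fin n, Monotone ψ → ψ ≤ φ → ψ ∈ J)
    (hJne : J.Nonempty)
    (A : Finset (P × Fin n)) (hsurj : ∀ p : P, ∃ i, (p, i) ∈ A)
    (φA : P → Fin n)
    (hφA : ∀ p : P, (p, φA p) ∈ A ∧ ∀ i : Fin n, (p, i) ∈ A → i ≤ φA p) :
    mA k A ∉ BJ k J ↔
      ((∀ x ∈ A, ∀ y ∈ A, x.1 < y.1 → ¬ y.2 < x.2) ∧ Monotone φA ∧ φA ∈ J) := by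
  classical
  set S : Set ((P × Fin n) →₀ ℕ) :=
    {s | ∃ ψ : P → Fin n, Monotone ψ ∧ ψ ∉ J ∧ s = eF (GammaF ψ)} ∪
      {s | ∃ (p q : P) (i j : Fin n), p < q ∧ j < i ∧
        s = Finsupp.single (p, i) 1 + Finsupp.single (q, j) 1} with hS
  have hBJ : BJ k J = Ideal.span ((fun s => monomial s (1 : k)) '' S) := by
    rw [BJ]
    congr 1
    rw [hS, Set.image_union]
    congr 1
    · ext m
      simp only [Set.mem_image, Set.mem_setOf_eq]
      constructor
      · rintro ⟨ψ, hmono, hψJ, rfl⟩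
        exact ⟨eF (GammaF ψ), ⟨ψ, hmono, hψJ, rfl⟩, (mA_eq_monomial k _).symm⟩
      · rintro ⟨s, ⟨ψ, hmono, hψJ, rfl⟩, rfl⟩
        exact ⟨ψ, hmono, hψJ, (mA_eq_monomial k _).symm⟩
    · ext m
      simp only [Set.mem_image, Set.mem_setOf_eq]
      constructor
      · rintro ⟨p, q, i, j, hpq, hji, rfl⟩
        refine ⟨_, ⟨p, q, i, j, hpq, hji, rfl⟩, ?_⟩
        rw [X, X, monomial_mul, one_mul]
      · rintro ⟨s, ⟨p, q, i, j, hpq, hji, rfl⟩, rfl⟩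
        refine ⟨p, q, i, j, hpq, hji, ?_⟩
        rw [X, X, monomial_mul, one_mul]
  have hmem : mA k A ∈ BJ k J ↔
      (∃ ψ : P → Fin n, Monotone ψ ∧ ψ ∉ J ∧ ↑(GammaF ψ) ⊆ (A : Finset _)) ∨
      (∃ (p q : P) (i j : Fin n), p < q ∧ j < i ∧ (p, i) ∈ A ∧ (q, j) ∈ A) := by
    rw [hBJ, mA_eq_monomial, mem_ideal_span_monomial_image]
    rw [support_monomial, if_neg (one_ne_zero : (1 : k) ≠ 0)]
    simp only [Finset.mem_singleton, forall_eq]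
    constructor
    · rintro ⟨s, hsS, hle⟩
      rcases hsS with ⟨ψ, hmono, hψJ, rfl⟩ | ⟨p, q, i, j, hpq, hji, rfl⟩
      · exact Or.inl ⟨ψ, hmono, hψJ, eF_le_eF.mp hle⟩
      · have hne : ((p, i) : P × Fin n) ≠ (q, j) := by
          intro hh
          exact absurd (congrArg Prod.fst hh) hpq.ne
        rcases (pair_le_eF hne).mp hle with ⟨h1, h2⟩
        exact Or.inr ⟨p, q, i, j, hpq, hji, h1, h2⟩
    · rintro (⟨ψ, hmono, hψJ, hsub⟩ | ⟨p, q, i, j, hpq, hji, h1, h2⟩)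
      · exact ⟨eF (GammaF ψ), Or.inl ⟨ψ, hmono, hψJ, rfl⟩, eF_le_eF.mpr hsub⟩
      · have hne : ((p, i) : P × Fin n) ≠ (q, j) := by
          intro hh
          exact absurd (congrArg Prod.fst hh) hpq.ne
        exact ⟨_, Or.inr ⟨p, q, i, j, hpq, hji, rfl⟩, (pair_le_eF hne).mpr ⟨h1, h2⟩⟩
  rw [hmem]
  push_neg
  constructor
  · rintro ⟨hψs, hquad⟩
    have hstair : ∀ x ∈ A, ∀ y ∈ A, x.1 < y.1 → x.2 ≤ y.2 := by
      intro x hx y hy hlt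
      by_contra h
      push_neg at h
      exact hquad x.1 y.1 x.2 y.2 hlt h (by simpa using hx) (by simpa using hy)
    have hmono : Monotone φA := by
      intro p q hpq
      rcases eq_or_lt_of_le hpq with rfl | hlt
      · exact le_refl _
      · exact hstair (p, φA p) (hφA p).1 (q, φA q) (hφA q).1 hlt
    refine ⟨hstair, hmono, ?_⟩
    by_contra hφJ
    refine hψs φA hmono hφJ ?_
    intro a ha
    rw [GammaF] at ha
    simp only [Finset.mem_image, Finset.mem_univ, true_and] at ha
    obtain ⟨p, rfl⟩ := ha
    exact (hφA p).1
  · rintro ⟨hstair, hmono, hφJ⟩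
    constructor
    · intro ψ hψm hψJ hsub
      refine hψJ (hJ2 φA hφJ ψ hψm ?_)
      intro p
      have : (p, ψ p) ∈ A := by
        refine hsub ?_
        rw [GammaF]
        simp only [Finset.mem_image, Finset.mem_univ, true_and]
        exact ⟨p, rfl⟩
      exact (hφA p).2 _ this
    · intro p q i j hpq hji h1 h2
      exact absurd hji (not_lt.mpr (hstair (p, i) h1 (q, j) h2 hpq))
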